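/- Let H be a Hilbert space, V ⊆ H a closed subspace, and let u ∈ H with Galerkin error e := u − P_a u where P_a is the a-orthogonal projection onto V for a symmetric continuous coercive bilinear form a. Suppose a duality estimate holds: there is C > 0 such that for every f ∈ H there is w ∈ H with a(v, w) = ⟨f, v⟩ for all v ∈ H and an approximation w̃ ∈ V with ‖w − w̃‖_a ≤ C ε ‖f‖ for a parameter ε > 0. Then ‖e‖ ≤ C ε ‖e‖_a, where ‖·‖_a := a(·,·)^{1/2} and ‖·‖ is the H-norm. -/

import Mathlib

lemma cs_bilin {H : Type*} [NormedAddCommGroup H] [InnerProductSpace ℝ H]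
    (a : H →ₗ[ℝ] H →ₗ[ℝ] ℝ) (hsym : ∀ u v : H, a u v = a v u)
    (hnn : ∀ v : H, 0 ≤ a v v) (x y : H) :
    (a x y) ^ 2 ≤ a x x * a y y := by
  have h : ∀ t : ℝ, 0 ≤ (a y y) * (t * t) + (2 * a x y) * t + a x x := by
    intro t
    have h0 := hnn (x + t • y)
    simp only [map_add, map_smul, LinearMap.add_apply, LinearMap.smul_apply,
      smul_eq_mul] at h0
    rw [hsym y x] at h0
    nlinarith [h0]
  have hd := discrim_le_zero h
  unfold discrim at hd
  nlinarith

theorem stmt_14 {H : Type*} [NormedAddCommGroup H] [InnerProductSpace ℝ H]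
    [CompleteSpace H] (a : H →ₗ[ℝ] H →ₗ[ℝ] ℝ) (Mc γ : ℝ) (hγ : 0 < γ)
    (hcont : ∀ u v : H, |a u v| ≤ Mc * ‖u‖ * ‖v‖)
    (hcoer : ∀ v : H, a v v ≥ γ * ‖v‖ ^ 2)
    (hsym : ∀ u v : H, a u v = a v u)
    (V : Submodule ℝ H) (e : H)
    (horth : ∀ v ∈ V, a e v = 0)
    (C ε : ℝ) (hC : 0 < C) (hε : 0 < ε)
    (hdual : ∀ f : H, ∃ w : H, (∀ v : H, a v w = inner ℝ f v) ∧
      ∃ wt ∈ V, Real.sqrt (a (w - wt) (w - wt)) ≤ C * ε * ‖f‖) :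
    ‖e‖ ≤ C * ε * Real.sqrt (a e e) := by
  have hnn : ∀ v : H, 0 ≤ a v v := fun v => le_trans (by positivity) (hcoer v)
  obtain ⟨w, hw, wt, hwt, hest⟩ := hdual e
  have h1 : ‖e‖ ^ 2 = a e (w - wt) := by
    have : a e w = ‖e‖ ^ 2 := by
      rw [hw e, real_inner_self_eq_norm_sq]
    simp [map_sub, this, horth wt hwt]
  have h2 : a e (w - wt) ≤ Real.sqrt (a e e) * Real.sqrt (a (w - wt) (w - wt)) := by
    have hcs := cs_bilin a hsym hnn e (w - wt)
    have h3 : |a e (w - wt)| ≤ Real.sqrt (a e e) * Real.sqrt (a (w - wt) (w - wt)) := by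
      rw [← Real.sqrt_sq_eq_abs, ← Real.sqrt_mul (hnn e)]
      exact Real.sqrt_le_sqrt hcs
    exact le_trans (le_abs_self _) h3
  have h4 : ‖e‖ ^ 2 ≤ Real.sqrt (a e e) * (C * ε * ‖e‖) := by
    calc ‖e‖ ^ 2 = a e (w - wt) := h1
    _ ≤ Real.sqrt (a e e) * Real.sqrt (a (w - wt) (w - wt)) := h2
    _ ≤ Real.sqrt (a e e) * (C * ε * ‖e‖) := by
        exact mul_le_mul_of_nonneg_left hest (Real.sqrt_nonneg _)
  rcases eq_or_ne e 0 with he | he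
  · simp [he]
  · have hne : 0 < ‖e‖ := norm_pos_iff.mpr he
    nlinarith [Real.sqrt_nonneg (a e e)]
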